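/- For every prime p and every nonzero polynomial f ∈ ℤ[t], the image of f in ℤ_p[[t^ℤ̂]] is not a zero-divisor: if g ∈ ℤ_p[[t^ℤ̂]] satisfies f·g = 0, then g = 0. -/

import Mathlib

open Polynomial

set_option synthInstance.maxHeartbeats 1000000
set_option maxHeartbeats 1000000

noncomputable section
noncomputable section

/-- The ring of profinite integers `ẐZ = lim_n ℤ/nℤ`, realized as the subring of
`∏ n : ℕ+, ZMod n` consisting of families compatible under the natural projections. -/
def ZHatSubring : Subring (∀ n : ℕ+, ZMod n) where
  carrier := {f | ∀ (m n : ℕ+) (h : (m : ℕ) ∣ (n : ℕ)), ZMod.castHom h (ZMod m) (f n) = f m}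
  mul_mem' := fun {a b} ha hb m n h => by
    simp only [Pi.mul_apply, map_mul, ha m n h, hb m n h]
  one_mem' := fun m n h => map_one _
  add_mem' := fun {a b} ha hb m n h => by
    simp only [Pi.add_apply, map_add, ha m n h, hb m n h]
  zero_mem' := fun m n h => map_zero _
  neg_mem' := fun {a} ha m n h => by
    simp only [Pi.neg_apply, map_neg, ha m n h]

/-- The profinite integers as a type. -/
abbrev ZHat : Type := ZHatSubring

instance : CommRing ZHat := inferInstance

/-- The quotient ring `R[t]/(tⁿ - 1)`. -/
abbrev CycModN (R : Type) [CommRing R] (n : ℕ+) : Type :=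
  Polynomial R ⧸ Ideal.span {(X : Polynomial R) ^ (n : ℕ) - 1}

lemma X_pow_sub_one_dvd {R : Type} [CommRing R] {m n : ℕ} (h : m ∣ n) :
    (X : Polynomial R) ^ m - 1 ∣ (X : Polynomial R) ^ n - 1 := by
  obtain ⟨k, rfl⟩ := h
  simpa [pow_mul] using sub_dvd_pow_sub_pow ((X : Polynomial R) ^ m) 1 k

/-- The natural transition map `R[t]/(tⁿ-1) → R[t]/(tᵐ-1)` for `m ∣ n`. -/
def cycTransition (R : Type) [CommRing R] {m n : ℕ+} (h : (m : ℕ) ∣ (n : ℕ)) :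
    CycModN R n →+* CycModN R m :=
  Ideal.Quotient.factor
    (Ideal.span_singleton_le_span_singleton.mpr (X_pow_sub_one_dvd h))

/-- The completed group ring `R[[t^Ẑ]] = lim_n R[t]/(tⁿ-1)`, realized as the subring of
`∏ n : ℕ+, R[t]/(tⁿ-1)` of families compatible under the transition maps. -/
def CompletedCycRing (R : Type) [CommRing R] : Subring (∀ n : ℕ+, CycModN R n) where
  carrier := {f | ∀ (m n : ℕ+) (h : (m : ℕ) ∣ (n : ℕ)), cycTransition R h (f n) = f m}
  mul_mem' := fun {a b} ha hb m n h => by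
    simp only [Pi.mul_apply, map_mul, ha m n h, hb m n h]
  one_mem' := fun m n h => map_one _
  add_mem' := fun {a b} ha hb m n h => by
    simp only [Pi.add_apply, map_add, ha m n h, hb m n h]
  zero_mem' := fun m n h => map_zero _
  neg_mem' := fun {a} ha m n h => by
    simp only [Pi.neg_apply, map_neg, ha m n h]

instance completedCycRingCommRing (R : Type) [CommRing R] :
    CommRing (CompletedCycRing R) := inferInstance

/-- The natural ring homomorphism `R[t] → R[[t^Ẑ]]`, `f ↦ (f mod (tⁿ-1))ₙ`. -/
def polyToCompleted (R : Type) [CommRing R] : Polynomial R →+* CompletedCycRing R :=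
  RingHom.codRestrict (Pi.ringHom fun n => Ideal.Quotient.mk _) _
    (fun f m n h => by
      simp [cycTransition, Pi.ringHom_apply]
      exact Ideal.Quotient.factor_mk _ f)

/-- The natural ring homomorphism `ℤ[t] → R[[t^Ẑ]]`. -/
def intPolyEmb (R : Type) [CommRing R] : Polynomial ℤ →+* CompletedCycRing R :=
  (polyToCompleted R).comp (Polynomial.mapRingHom (Int.castRingHom R))


lemma geom_ideal_aux {R : Type*} [CommRing R] (p : ℕ) (y : R) :
    ∀ k : ℕ, ∃ B ∈ (Ideal.span {(p : R), y - 1}) ^ k, y ^ p ^ k - 1 = (y - 1) * B := by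
  intro k
  induction k with
  | zero => exact ⟨1, by simp, by simp⟩
  | succ k ih =>
    obtain ⟨B, hB, hEq⟩ := ih
    set S : R := ∑ i ∈ Finset.range p, (y ^ p ^ k) ^ i with hSdef
    have hy1 : (y - 1) ∣ y ^ p ^ k - 1 := Dvd.intro _ hEq.symm
    have h1 : (y - 1) ∣ S - (p : R) := by
      have hsum : S - (p : R) = ∑ i ∈ Finset.range p, ((y ^ p ^ k) ^ i - 1) := by
        rw [Finset.sum_sub_distrib]
        simp
        exact hSdef
      rw [hsum]
      refine Finset.dvd_sum fun i _ => ?_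
      calc (y - 1) ∣ y ^ p ^ k - 1 := hy1
        _ ∣ (y ^ p ^ k) ^ i - 1 := by
          simpa using sub_dvd_pow_sub_pow (y ^ p ^ k) 1 i
    obtain ⟨W, hW⟩ := h1
    have hS : S ∈ Ideal.span {(p : R), y - 1} := by
      have : S = (p : R) + (y - 1) * W := by rw [← hW]; ring
      rw [this]
      exact Ideal.add_mem _ (Ideal.subset_span (by simp))
        (Ideal.mul_mem_right _ _ (Ideal.subset_span (by simp)))
    refine ⟨B * S, ?_, ?_⟩
    · rw [pow_succ]; exact Ideal.mul_mem_mul hB hS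
    · have h2 : y ^ p ^ (k + 1) - 1 = (y ^ p ^ k - 1) * S := by
        rw [pow_succ, pow_mul]
        exact (mul_geom_sum _ _).symm
      rw [h2, hEq, mul_assoc]

lemma padicint_eq_zero_of_forall_pow_dvd {p : ℕ} [Fact p.Prime] (a : ℤ_[p])
    (h : ∀ k : ℕ, (p : ℤ_[p]) ^ k ∣ a) : a = 0 := by
  by_contra ha
  have hnorm : ∀ k : ℕ, ‖a‖ ≤ (p : ℝ) ^ (-(k : ℤ)) := by
    intro k
    rw [PadicInt.norm_le_pow_iff_mem_span_pow]
    exact Ideal.mem_span_singleton.2 (h k)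
  have hp1 : (1 : ℝ) < p := by exact_mod_cast (Fact.out : p.Prime).one_lt
  obtain ⟨k, hk⟩ := exists_pow_lt_of_lt_one (norm_pos_iff.2 ha) (inv_lt_one_of_one_lt₀ hp1)
  have := hnorm k
  rw [zpow_neg, zpow_natCast, ← inv_pow] at this
  linarith

lemma adjoinroot_eq_zero_of_forall_pow_dvd {p : ℕ} [Fact p.Prime] {h : Polynomial ℤ_[p]}
    (hm : h.Monic) (x : AdjoinRoot h)
    (hx : ∀ k : ℕ, (p : AdjoinRoot h) ^ k ∣ x) : x = 0 := by
  have key : ∀ i : ℕ, (AdjoinRoot.modByMonicHom hm x).coeff i = 0 := by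
    intro i
    apply padicint_eq_zero_of_forall_pow_dvd
    intro k
    obtain ⟨y, hy⟩ := hx k
    have hsmul : x = ((p : ℤ_[p]) ^ k) • y := by
      rw [hy, Algebra.smul_def]
      congr 1
      rw [map_pow, map_natCast]
    rw [hsmul, map_smul, coeff_smul]
    exact Dvd.intro _ rfl
  have hzero : AdjoinRoot.modByMonicHom hm x = 0 := Polynomial.ext fun i => key i
  have h2 := AdjoinRoot.mk_leftInverse hm x
  rw [hzero, map_zero] at h2
  exact h2.symm

lemma X_pow_sub_one_dvd'' {R : Type*} [CommRing R] {m n : ℕ} (h : m ∣ n) :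
    (X : Polynomial R) ^ m - 1 ∣ (X : Polynomial R) ^ n - 1 := by
  obtain ⟨k, rfl⟩ := h
  simpa [pow_mul] using sub_dvd_pow_sub_pow ((X : Polynomial R) ^ m) 1 k

lemma monic_dvd_eq {K : Type*} [Field K] {a b : K[X]} (ha : a.Monic) (hb : b.Monic)
    (h : a ∣ b) (hd : b.natDegree ≤ a.natDegree) : a = b := by
  obtain ⟨u, rfl⟩ := h
  have hu0 : u ≠ 0 := right_ne_zero_of_mul hb.ne_zero
  have hdeg : u.natDegree = 0 := by
    have := natDegree_mul ha.ne_zero hu0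
    omega
  obtain ⟨x, hx⟩ := Polynomial.natDegree_eq_zero.mp hdeg
  have hlc : u.leadingCoeff = 1 := by
    have := hb.leadingCoeff
    rwa [leadingCoeff_mul, ha.leadingCoeff, one_mul] at this
  rw [← hx] at hlc ⊢
  rw [leadingCoeff_C] at hlc
  rw [hlc, C_1, mul_one]

lemma gcd_monic {K : Type*} [Field K] [DecidableEq K] {F G : K[X]} (hF : F ≠ 0) :
    (gcd F G).Monic := by
  have hne : gcd F G ≠ 0 := fun h => hF ((gcd_eq_zero_iff F G).mp h).1
  have := Polynomial.monic_normalize hne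
  rwa [normalize_gcd] at this

lemma gcd_X_pow_sub_one_stab {K : Type*} [Field K] [DecidableEq K] (F : K[X]) (hF : F ≠ 0)
    (N p : ℕ) :
    ∃ k₀ : ℕ, ∀ k : ℕ,
      gcd F ((X : K[X]) ^ (N * p ^ (k₀ + k)) - 1) = gcd F ((X : K[X]) ^ (N * p ^ k₀) - 1) := by
  have hdvd : ∀ {a b : ℕ}, a ∣ b →
      gcd F ((X : K[X]) ^ (N * a) - 1) ∣ gcd F ((X : K[X]) ^ (N * b) - 1) := by
    intro a b hab
    refine dvd_gcd (gcd_dvd_left _ _) ?_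
    calc gcd F ((X : K[X]) ^ (N * a) - 1) ∣ (X : K[X]) ^ (N * a) - 1 := gcd_dvd_right _ _
      _ ∣ (X : K[X]) ^ (N * b) - 1 := X_pow_sub_one_dvd'' (mul_dvd_mul_left N hab)
  set d : ℕ → ℕ := fun k => (gcd F ((X : K[X]) ^ (N * p ^ k) - 1)).natDegree with hd
  have hbdd : BddAbove (Set.range d) := by
    refine ⟨F.natDegree, ?_⟩
    rintro - ⟨k, rfl⟩
    exact natDegree_le_of_dvd (gcd_dvd_left _ _) hF
  obtain ⟨k₀, hk₀⟩ := Nat.sSup_mem (Set.range_nonempty d) hbdd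
  refine ⟨k₀, fun k => ?_⟩
  have h1 : gcd F ((X : K[X]) ^ (N * p ^ k₀) - 1) ∣ gcd F ((X : K[X]) ^ (N * p ^ (k₀ + k)) - 1) :=
    hdvd (pow_dvd_pow p (Nat.le_add_right k₀ k))
  have h2 : d (k₀ + k) ≤ d k₀ := by
    rw [hk₀]; exact le_csSup hbdd ⟨k₀ + k, rfl⟩
  exact (monic_dvd_eq (gcd_monic hF) (gcd_monic hF) h1 h2).symm

/-- For every prime `p` and every nonzero `f ∈ ℤ[t]`, the image of `f` in
`ℤ_p[[t^Ẑ]]` is not a zero-divisor. -/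
theorem int_poly_not_zeroDivisor_in_padic_completed_group_ring
    (p : ℕ) [Fact p.Prime] (f : Polynomial ℤ) (hf : f ≠ 0)
    (g : CompletedCycRing (PadicInt p))
    (hfg : intPolyEmb (PadicInt p) f * g = 0) : g = 0 := by
  classical
  have hp : p.Prime := Fact.out
  set O := PadicInt p with hO
  set F : Polynomial O := f.map (Int.castRingHom O) with hF
  set FK : Polynomial ℚ_[p] := f.map (Int.castRingHom ℚ_[p]) with hFKdef
  have hmapF : F.map (algebraMap O ℚ_[p]) = FK := by
    rw [hF, hFKdef, Polynomial.map_map]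
    congr 1
  have hFK : FK ≠ 0 := by
    rw [hFKdef]
    exact (Polynomial.map_ne_zero_iff (f := Int.castRingHom ℚ_[p]) Int.cast_injective).2 hf
  have hcomp : ∀ m : ℕ+,
      Ideal.Quotient.mk (Ideal.span {(X : Polynomial O) ^ ((m : ℕ+) : ℕ) - 1}) F * g.1 m = 0 :=
    fun m => congrFun (congrArg Subtype.val hfg) m
  suffices hzero : ∀ n : ℕ+, g.1 n = 0 by
    apply Subtype.ext
    funext n
    exact hzero n
  intro n
  obtain ⟨k₀, hstab⟩ := gcd_X_pow_sub_one_stab FK hFK (n : ℕ) p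
  set c : Polynomial ℚ_[p] := gcd FK ((X : Polynomial ℚ_[p]) ^ ((n : ℕ) * p ^ k₀) - 1) with hc
  have hcmonic : c.Monic := gcd_monic hFK
  have hcne : c ≠ 0 := hcmonic.ne_zero
  set pk₀ : ℕ+ := ⟨p ^ k₀, pow_pos hp.pos k₀⟩ with hpk₀
  set n₁ : ℕ+ := n * pk₀ with hn₁def
  have hn₁ℕ : ((n₁ : ℕ+) : ℕ) = (n : ℕ) * p ^ k₀ := rfl
  have hinj : Function.Injective (algebraMap O ℚ_[p]) := IsFractionRing.injective O ℚ_[p]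
  have h₁monic : ((X : Polynomial O) ^ ((n₁ : ℕ+) : ℕ) - 1).Monic := by
    have := monic_X_pow_sub_C (1 : O) n₁.pos.ne'
    simpa using this
  have hmapXn : ∀ (s : ℕ), ((X : Polynomial O) ^ s - 1).map (algebraMap O ℚ_[p])
      = (X : Polynomial ℚ_[p]) ^ s - 1 := by
    intro s
    simp [Polynomial.map_sub, Polynomial.map_pow]
  have hcdvd : c ∣ ((X : Polynomial O) ^ ((n₁ : ℕ+) : ℕ) - 1).map (algebraMap O ℚ_[p]) := by
    rw [hmapXn, hn₁ℕ]
    exact gcd_dvd_right _ _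
  obtain ⟨C', hC'⟩ := IsIntegrallyClosed.eq_map_mul_C_of_dvd ℚ_[p] h₁monic hcdvd
  rw [hcmonic.leadingCoeff, map_one, mul_one] at hC'
  have hC'monic : C'.Monic := monic_of_injective hinj (by rw [hC']; exact hcmonic)
  have hC'ne : C' ≠ 0 := hC'monic.ne_zero
  have hC'dvd : C' ∣ (X : Polynomial O) ^ ((n₁ : ℕ+) : ℕ) - 1 := by
    apply (map_dvd_map _ hinj hC'monic).mp
    rw [hC']
    exact hcdvd
  obtain ⟨E, hE⟩ := hC'dvd
  suffices hn₁zero : g.1 n₁ = 0 by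
    have hdvdn : ((n : ℕ+) : ℕ) ∣ ((n₁ : ℕ+) : ℕ) := ⟨p ^ k₀, rfl⟩
    rw [← g.2 n n₁ hdvdn, hn₁zero, map_zero]
  refine adjoinroot_eq_zero_of_forall_pow_dvd h₁monic (g.1 n₁) ?_
  intro k
  set pk : ℕ+ := ⟨p ^ k, pow_pos hp.pos k⟩ with hpk
  set m : ℕ+ := n₁ * pk with hm
  have hmℕ' : ((m : ℕ+) : ℕ) = ((n₁ : ℕ+) : ℕ) * p ^ k := rfl
  have hmℕ : ((m : ℕ+) : ℕ) = (n : ℕ) * p ^ (k₀ + k) := by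
    rw [hmℕ', hn₁ℕ, pow_add, mul_assoc]
  have hgcdm : gcd FK ((X : Polynomial ℚ_[p]) ^ ((m : ℕ+) : ℕ) - 1) = c := by
    rw [hmℕ]
    exact hstab k
  have hC'dvdm : C' ∣ (X : Polynomial O) ^ ((m : ℕ+) : ℕ) - 1 := by
    apply (map_dvd_map _ hinj hC'monic).mp
    rw [hC', hmapXn, ← hgcdm]
    exact gcd_dvd_right _ _
  obtain ⟨Q, hQ⟩ := hC'dvdm
  have hmmonic : ((X : Polynomial O) ^ ((m : ℕ+) : ℕ) - 1).Monic := by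
    have := monic_X_pow_sub_C (1 : O) m.pos.ne'
    simpa using this
  have hQmonic : Q.Monic := hC'monic.of_mul_monic_left (by rw [← hQ]; exact hmmonic)
  obtain ⟨B, hBmem, hBeq⟩ := geom_ideal_aux p ((X : Polynomial O) ^ ((n₁ : ℕ+) : ℕ)) k
  have hXm : ((X : Polynomial O) ^ ((n₁ : ℕ+) : ℕ)) ^ p ^ k = (X : Polynomial O) ^ ((m : ℕ+) : ℕ) := by
    rw [← pow_mul, ← hmℕ']
  rw [hXm] at hBeq
  have hQEB : Q = E * B := by
    apply mul_left_cancel₀ hC'ne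
    rw [← hQ, hBeq, hE]
    ring
  obtain ⟨G, hG⟩ := Ideal.Quotient.mk_surjective (g.1 m)
  have hdvd1 : (X : Polynomial O) ^ ((m : ℕ+) : ℕ) - 1 ∣ F * G := by
    rw [← Ideal.mem_span_singleton, ← Ideal.Quotient.eq_zero_iff_mem, map_mul, hG]
    exact hcomp m
  have hdvd2 : (X : Polynomial ℚ_[p]) ^ ((m : ℕ+) : ℕ) - 1 ∣ FK * G.map (algebraMap O ℚ_[p]) := by
    have h6 := Polynomial.map_dvd (algebraMap O ℚ_[p]) hdvd1
    rwa [hmapXn, Polynomial.map_mul, hmapF] at h6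
  obtain ⟨F₁, hF₁⟩ := gcd_dvd_left FK ((X : Polynomial ℚ_[p]) ^ ((m : ℕ+) : ℕ) - 1)
  rw [hgcdm] at hF₁
  have hcQ : c * Q.map (algebraMap O ℚ_[p]) = (X : Polynomial ℚ_[p]) ^ ((m : ℕ+) : ℕ) - 1 := by
    have h7 := congrArg (Polynomial.map (algebraMap O ℚ_[p])) hQ
    rw [hmapXn, Polynomial.map_mul, hC'] at h7
    exact h7.symm
  have hcop : IsCoprime (Q.map (algebraMap O ℚ_[p])) F₁ := by
    rw [← gcd_isUnit_iff]
    have hd1 : c * gcd (Q.map (algebraMap O ℚ_[p])) F₁ ∣ c := by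
      conv_rhs => rw [← hgcdm]
      refine dvd_gcd ?_ ?_
      · rw [hF₁]
        exact mul_dvd_mul_left c (gcd_dvd_right _ _)
      · rw [← hcQ]
        exact mul_dvd_mul_left c (gcd_dvd_left _ _)
    have hd2 : c * gcd (Q.map (algebraMap O ℚ_[p])) F₁ ∣ c * 1 := by rwa [mul_one]
    exact isUnit_of_dvd_one ((mul_dvd_mul_iff_left hcne).mp hd2)
  have hQk_dvd : Q.map (algebraMap O ℚ_[p]) ∣ G.map (algebraMap O ℚ_[p]) * F₁ := by
    have h3 : c * Q.map (algebraMap O ℚ_[p]) ∣ c * (F₁ * G.map (algebraMap O ℚ_[p])) := by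
      rw [hcQ, ← mul_assoc, ← hF₁]
      exact hdvd2
    have := (mul_dvd_mul_iff_left hcne).mp h3
    rwa [mul_comm F₁] at this
  have hQG : Q ∣ G :=
    (map_dvd_map _ hinj hQmonic).mp (hcop.dvd_of_dvd_mul_right hQk_dvd)
  obtain ⟨H, hH⟩ := hQG
  have hdvdn₁ : ((n₁ : ℕ+) : ℕ) ∣ ((m : ℕ+) : ℕ) := ⟨p ^ k, rfl⟩
  have htrans : g.1 n₁ = Ideal.Quotient.mk (Ideal.span {(X : Polynomial O) ^ ((n₁ : ℕ+) : ℕ) - 1}) G := by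
    rw [← g.2 n₁ m hdvdn₁, ← hG]
    exact Ideal.Quotient.factor_mk _ G
  rw [htrans, hH, hQEB]
  have hmapI : Ideal.map (Ideal.Quotient.mk (Ideal.span {(X : Polynomial O) ^ ((n₁ : ℕ+) : ℕ) - 1}))
      (Ideal.span {((p : ℕ) : Polynomial O), (X : Polynomial O) ^ ((n₁ : ℕ+) : ℕ) - 1})
      ≤ Ideal.span {((p : ℕ) : CycModN O n₁)} := by
    rw [Ideal.map_span]
    apply Ideal.span_le.2
    rintro x ⟨y, hy, rfl⟩
    rcases hy with rfl | rfl
    · exact Ideal.subset_span (by simp)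
    · have h8 : Ideal.Quotient.mk (Ideal.span {(X : Polynomial O) ^ ((n₁ : ℕ+) : ℕ) - 1})
          ((X : Polynomial O) ^ ((n₁ : ℕ+) : ℕ) - 1) = 0 :=
        Ideal.Quotient.eq_zero_iff_mem.2 (Ideal.subset_span rfl)
      rw [h8]
      exact Ideal.zero_mem _
  have hBmk : ((p : ℕ) : CycModN O n₁) ^ k ∣
      Ideal.Quotient.mk (Ideal.span {(X : Polynomial O) ^ ((n₁ : ℕ+) : ℕ) - 1}) B := by
    have h5 := Ideal.mem_map_of_mem
      (Ideal.Quotient.mk (Ideal.span {(X : Polynomial O) ^ ((n₁ : ℕ+) : ℕ) - 1})) hBmem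
    rw [Ideal.map_pow] at h5
    have h9 := Ideal.pow_right_mono hmapI k h5
    rw [Ideal.span_singleton_pow] at h9
    exact Ideal.mem_span_singleton.1 h9
  rw [map_mul, map_mul]
  exact (hBmk.mul_left _).mul_right _
end
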